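/- Let n, m, K ∈ ℕ with K ≥ 1 and Δt > 0. Let ‖·‖_V be the norm on ℝⁿ induced by an inner product ⟨·,·⟩_V, let ℝᵐ carry an inner product with norm ‖·‖_C, and let 𝒞 : ℝⁿ → ℝᵐ be linear with ‖𝒞v‖_C ≤ γ‖v‖_V for all v ∈ ℝⁿ (γ ≥ 0). Let A ∈ ℝ^{n×n} be symmetric with vᵀAv ≥ a‖v‖_V² for all v ∈ ℝⁿ, where a > 0. Let u_h, u_r : {1,…,K} → ℝⁿ, y : {1,…,K} → ℝᵐ, set e^k := u_h^k − u_r^k, J_h := (Δt/2)·Σ_{k=1}^{K} ‖𝒞u_h^k − y^k‖_C², J_r := (Δt/2)·Σ_{k=1}^{K} ‖𝒞u_r^k − y^k‖_C², and Δ̃ := (Δt·Σ_{k=1}^{K} (e^k)ᵀAe^k)^{1/2}. Then |J_h − J_r| ≤ (γ²/(2a))·Δ̃² + γ·(2J_r/a)^{1/2}·Δ̃. -/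

import Mathlib

open Matrix Finset

lemma psd_symm_dot {n : ℕ} {G : Matrix (Fin n) (Fin n) ℝ} (hsym : G.IsSymm)
    (u v : Fin n → ℝ) : u ⬝ᵥ (G *ᵥ v) = v ⬝ᵥ (G *ᵥ u) := by
  rw [Matrix.dotProduct_mulVec, ← Matrix.mulVec_transpose, hsym.eq, dotProduct_comm]

lemma psd_cauchy {n : ℕ} {G : Matrix (Fin n) (Fin n) ℝ} (hsym : G.IsSymm)
    (hpsd : ∀ v : Fin n → ℝ, 0 ≤ v ⬝ᵥ (G *ᵥ v)) (x y : Fin n → ℝ) :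
    (x ⬝ᵥ (G *ᵥ y))^2 ≤ (x ⬝ᵥ (G *ᵥ x)) * (y ⬝ᵥ (G *ᵥ y)) := by
  have h : ∀ t : ℝ, 0 ≤ (y ⬝ᵥ (G *ᵥ y)) * (t * t) + (2 * (x ⬝ᵥ (G *ᵥ y))) * t
      + (x ⬝ᵥ (G *ᵥ x)) := by
    intro t
    have h2 := hpsd (x + t • y)
    simp only [Matrix.mulVec_add, Matrix.mulVec_smul, dotProduct_add, add_dotProduct,
      dotProduct_smul, smul_dotProduct, smul_eq_mul] at h2
    rw [psd_symm_dot hsym y x] at h2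
    nlinarith [h2]
  have := discrim_le_zero h
  rw [discrim] at this
  nlinarith [this]

lemma apost_aux (S : Finset ℕ) (Δt a γ : ℝ) (hΔt : 0 < Δt) (ha : 0 < a) (hγ : 0 ≤ γ)
    (pp qq dd dq ee : ℕ → ℝ)
    (hdd0 : ∀ k ∈ S, 0 ≤ dd k) (hqq0 : ∀ k ∈ S, 0 ≤ qq k) (hee0 : ∀ k ∈ S, 0 ≤ ee k)
    (hexp : ∀ k ∈ S, pp k = qq k + 2 * dq k + dd k)
    (hcs : ∀ k ∈ S, (dq k)^2 ≤ dd k * qq k)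
    (hdde : ∀ k ∈ S, dd k ≤ γ^2 / a * ee k) :
    |(Δt/2) * ∑ k ∈ S, pp k - (Δt/2) * ∑ k ∈ S, qq k| ≤
      γ^2/(2*a) * (Real.sqrt (Δt * ∑ k ∈ S, ee k))^2 +
      γ * Real.sqrt (2 * ((Δt/2) * ∑ k ∈ S, qq k)/a) * Real.sqrt (Δt * ∑ k ∈ S, ee k) := by
  set X := ∑ k ∈ S, dd k with hX
  set Y := ∑ k ∈ S, qq k with hY
  set D := ∑ k ∈ S, ee k with hD
  set T := ∑ k ∈ S, dq k with hT
  have hX0 : 0 ≤ X := Finset.sum_nonneg hdd0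
  have hY0 : 0 ≤ Y := Finset.sum_nonneg hqq0
  have hD0 : 0 ≤ D := Finset.sum_nonneg hee0
  -- rewrite the difference
  have hsum : ∑ k ∈ S, pp k = Y + 2 * T + X := by
    rw [Finset.sum_congr rfl hexp, Finset.sum_add_distrib, Finset.sum_add_distrib,
      ← Finset.mul_sum]
  have hdiff : (Δt/2) * ∑ k ∈ S, pp k - (Δt/2) * Y = (Δt/2) * X + Δt * T := by
    rw [hsum]; ring
  -- Cauchy–Schwarz for the cross term
  have habs : |T| ≤ Real.sqrt X * Real.sqrt Y := by
    have hstep : ∀ k ∈ S, |dq k| ≤ Real.sqrt (dd k) * Real.sqrt (qq k) := by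
      intro k hk
      rw [← Real.sqrt_sq_eq_abs, ← Real.sqrt_mul (hdd0 k hk)]
      exact Real.sqrt_le_sqrt (hcs k hk)
    have hnn : 0 ≤ ∑ k ∈ S, Real.sqrt (dd k) * Real.sqrt (qq k) :=
      Finset.sum_nonneg fun k _ => mul_nonneg (Real.sqrt_nonneg _) (Real.sqrt_nonneg _)
    have hsq := sum_sq_le_sum_mul_sum_of_sq_eq_mul S hdd0 hqq0
      (r := fun k => Real.sqrt (dd k) * Real.sqrt (qq k))
      (fun k hk => by rw [mul_pow, Real.sq_sqrt (hdd0 k hk), Real.sq_sqrt (hqq0 k hk)])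
    calc |T| ≤ ∑ k ∈ S, |dq k| := Finset.abs_sum_le_sum_abs _ _
      _ ≤ ∑ k ∈ S, Real.sqrt (dd k) * Real.sqrt (qq k) := Finset.sum_le_sum hstep
      _ = Real.sqrt ((∑ k ∈ S, Real.sqrt (dd k) * Real.sqrt (qq k))^2) :=
          (Real.sqrt_sq hnn).symm
      _ ≤ Real.sqrt (X * Y) := Real.sqrt_le_sqrt hsq
      _ = Real.sqrt X * Real.sqrt Y := Real.sqrt_mul hX0 _
  -- bound X by D
  have hXD : X ≤ γ^2/a * D := by
    calc X ≤ ∑ k ∈ S, γ^2/a * ee k := Finset.sum_le_sum hdde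
      _ = γ^2/a * D := by rw [← Finset.mul_sum]
  -- simplify the RHS
  have hRHS1 : (Real.sqrt (Δt * D))^2 = Δt * D := Real.sq_sqrt (mul_nonneg hΔt.le hD0)
  have hRHS2 : 2 * ((Δt/2) * Y) / a = (Δt * Y)/a := by ring
  rw [hdiff, hRHS1, hRHS2]
  -- first term
  have h1 : (Δt/2) * X ≤ γ^2/(2*a) * (Δt * D) := by
    calc (Δt/2) * X ≤ (Δt/2) * (γ^2/a * D) := by
          apply mul_le_mul_of_nonneg_left hXD (by linarith)
      _ = γ^2/(2*a) * (Δt * D) := by field_simp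
  -- second term
  have h2 : Δt * |T| ≤ γ * Real.sqrt ((Δt * Y)/a) * Real.sqrt (Δt * D) := by
    have e1 : Real.sqrt ((Δt * Y)/a) = Real.sqrt (Δt * Y) / Real.sqrt a :=
      Real.sqrt_div (mul_nonneg hΔt.le hY0) a
    have e2 : Real.sqrt (Δt * X) ≤ γ / Real.sqrt a * Real.sqrt (Δt * D) := by
      have : Δt * X ≤ γ^2/a * (Δt * D) := by
        calc Δt * X ≤ Δt * (γ^2/a * D) := mul_le_mul_of_nonneg_left hXD hΔt.le
          _ = γ^2/a * (Δt * D) := by ring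
      calc Real.sqrt (Δt * X) ≤ Real.sqrt (γ^2/a * (Δt * D)) := Real.sqrt_le_sqrt this
        _ = Real.sqrt (γ^2/a) * Real.sqrt (Δt * D) :=
            Real.sqrt_mul (by positivity) _
        _ = γ / Real.sqrt a * Real.sqrt (Δt * D) := by
            rw [Real.sqrt_div (sq_nonneg γ), Real.sqrt_sq hγ]
    have e3 : Δt * (Real.sqrt X * Real.sqrt Y) = Real.sqrt (Δt * X) * Real.sqrt (Δt * Y) := by
      rw [Real.sqrt_mul hΔt.le, Real.sqrt_mul hΔt.le]
      rw [show Real.sqrt Δt * Real.sqrt X * (Real.sqrt Δt * Real.sqrt Y)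
          = (Real.sqrt Δt * Real.sqrt Δt) * (Real.sqrt X * Real.sqrt Y) by ring,
        Real.mul_self_sqrt hΔt.le]
    calc Δt * |T| ≤ Δt * (Real.sqrt X * Real.sqrt Y) :=
          mul_le_mul_of_nonneg_left habs hΔt.le
      _ = Real.sqrt (Δt * X) * Real.sqrt (Δt * Y) := e3
      _ ≤ (γ / Real.sqrt a * Real.sqrt (Δt * D)) * Real.sqrt (Δt * Y) := by
          apply mul_le_mul_of_nonneg_right e2 (Real.sqrt_nonneg _)
      _ = γ * Real.sqrt ((Δt * Y)/a) * Real.sqrt (Δt * D) := by rw [e1]; ring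
  calc |(Δt/2) * X + Δt * T| ≤ (Δt/2) * X + Δt * |T| := by
        have := abs_add_le ((Δt/2) * X) (Δt * T)
        rw [abs_of_nonneg (mul_nonneg (by linarith) hX0), abs_mul,
          abs_of_pos hΔt] at this
        exact this
    _ ≤ γ^2/(2*a) * (Δt * D) + γ * Real.sqrt ((Δt * Y)/a) * Real.sqrt (Δt * D) := by
        linarith

/-- A posteriori error estimate for the reduced objective. The state space `ℝⁿ`
carries the inner-product norm `‖v‖_V = (vᵀVv)^{1/2}` induced by a symmetric
positive definite Gram matrix `V`, the observation space `ℝᵐ` the norm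
`‖w‖_C = (wᵀGw)^{1/2}` induced by a symmetric positive definite Gram matrix `G`.
The linear observation operator `𝒞 : v ↦ C *ᵥ v` satisfies `‖𝒞v‖_C ≤ γ‖v‖_V`,
and the symmetric stiffness matrix `A` is coercive: `vᵀAv ≥ a‖v‖_V²` with
`a > 0`. With `e^k = u_h^k − u_r^k`,
`J_h = (Δt/2)·Σ ‖𝒞u_h^k − y^k‖_C²`, `J_r = (Δt/2)·Σ ‖𝒞u_r^k − y^k‖_C²` and
`Δ̃ = (Δt·Σ (e^k)ᵀAe^k)^{1/2}`, one has
`|J_h − J_r| ≤ (γ²/(2a))·Δ̃² + γ·(2J_r/a)^{1/2}·Δ̃`. -/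
theorem objective_apost_error_estimate (n m K : ℕ) (hK : 1 ≤ K)
    (Δt : ℝ) (hΔt : 0 < Δt)
    (V : Matrix (Fin n) (Fin n) ℝ) (hV : V.PosDef)
    (G : Matrix (Fin m) (Fin m) ℝ) (hG : G.PosDef)
    (C : Matrix (Fin m) (Fin n) ℝ) (γ : ℝ) (hγ : 0 ≤ γ)
    (hC : ∀ v : Fin n → ℝ,
      Real.sqrt ((C *ᵥ v) ⬝ᵥ (G *ᵥ (C *ᵥ v))) ≤ γ * Real.sqrt (v ⬝ᵥ (V *ᵥ v)))
    (A : Matrix (Fin n) (Fin n) ℝ) (hA : A.IsSymm) (a : ℝ) (ha : 0 < a)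
    (hcoer : ∀ v : Fin n → ℝ, a * (v ⬝ᵥ (V *ᵥ v)) ≤ v ⬝ᵥ (A *ᵥ v))
    (uh ur : ℕ → Fin n → ℝ) (y : ℕ → Fin m → ℝ) :
    |(Δt / 2) * ∑ k ∈ Finset.Icc 1 K,
        ((C *ᵥ uh k - y k) ⬝ᵥ (G *ᵥ (C *ᵥ uh k - y k))) -
      (Δt / 2) * ∑ k ∈ Finset.Icc 1 K,
        ((C *ᵥ ur k - y k) ⬝ᵥ (G *ᵥ (C *ᵥ ur k - y k)))| ≤
    γ ^ 2 / (2 * a) *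
        (Real.sqrt (Δt * ∑ k ∈ Finset.Icc 1 K,
          ((uh k - ur k) ⬝ᵥ (A *ᵥ (uh k - ur k))))) ^ 2 +
      γ * Real.sqrt (2 * ((Δt / 2) * ∑ k ∈ Finset.Icc 1 K,
          ((C *ᵥ ur k - y k) ⬝ᵥ (G *ᵥ (C *ᵥ ur k - y k)))) / a) *
        Real.sqrt (Δt * ∑ k ∈ Finset.Icc 1 K,
          ((uh k - ur k) ⬝ᵥ (A *ᵥ (uh k - ur k)))) := by
  have hGs : G.IsSymm := by
    have := hG.1; rw [Matrix.IsHermitian] at this; rw [Matrix.IsSymm]; simpa using this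
  have hGpsd : ∀ v : Fin m → ℝ, 0 ≤ v ⬝ᵥ (G *ᵥ v) := fun v => by
    simpa using hG.posSemidef.dotProduct_mulVec_nonneg v
  have hVpsd : ∀ v : Fin n → ℝ, 0 ≤ v ⬝ᵥ (V *ᵥ v) := fun v => by
    simpa using hV.posSemidef.dotProduct_mulVec_nonneg v
  exact apost_aux (Finset.Icc 1 K) Δt a γ hΔt ha hγ
    (fun k => (C *ᵥ uh k - y k) ⬝ᵥ (G *ᵥ (C *ᵥ uh k - y k)))
    (fun k => (C *ᵥ ur k - y k) ⬝ᵥ (G *ᵥ (C *ᵥ ur k - y k)))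
    (fun k => (C *ᵥ (uh k - ur k)) ⬝ᵥ (G *ᵥ (C *ᵥ (uh k - ur k))))
    (fun k => (C *ᵥ (uh k - ur k)) ⬝ᵥ (G *ᵥ (C *ᵥ ur k - y k)))
    (fun k => (uh k - ur k) ⬝ᵥ (A *ᵥ (uh k - ur k)))
    (fun k _ => hGpsd _) (fun k _ => hGpsd _)
    (fun k _ => le_trans (mul_nonneg ha.le (hVpsd _)) (hcoer _))
    (fun k _ => by
      have hpk : C *ᵥ uh k - y k = (C *ᵥ ur k - y k) + C *ᵥ (uh k - ur k) := by
        rw [Matrix.mulVec_sub]; abel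
      rw [hpk]
      simp only [Matrix.mulVec_add, dotProduct_add, add_dotProduct]
      rw [psd_symm_dot hGs (C *ᵥ ur k - y k) (C *ᵥ (uh k - ur k))]
      ring)
    (fun k _ => psd_cauchy hGs hGpsd _ _)
    (fun k _ => by
      have h1 : (C *ᵥ (uh k - ur k)) ⬝ᵥ (G *ᵥ (C *ᵥ (uh k - ur k))) ≤
          γ^2 * ((uh k - ur k) ⬝ᵥ (V *ᵥ (uh k - ur k))) := by
        nlinarith [hC (uh k - ur k), Real.sq_sqrt (hGpsd (C *ᵥ (uh k - ur k))),
          Real.sq_sqrt (hVpsd (uh k - ur k)), Real.sqrt_nonneg ((uh k - ur k) ⬝ᵥ (V *ᵥ (uh k - ur k))),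
          Real.sqrt_nonneg ((C *ᵥ (uh k - ur k)) ⬝ᵥ (G *ᵥ (C *ᵥ (uh k - ur k))))]
      have h2 : (uh k - ur k) ⬝ᵥ (V *ᵥ (uh k - ur k)) ≤
          ((uh k - ur k) ⬝ᵥ (A *ᵥ (uh k - ur k))) / a := by
        rw [le_div_iff₀ ha]
        linarith [hcoer (uh k - ur k)]
      calc (C *ᵥ (uh k - ur k)) ⬝ᵥ (G *ᵥ (C *ᵥ (uh k - ur k)))
          ≤ γ^2 * ((uh k - ur k) ⬝ᵥ (V *ᵥ (uh k - ur k))) := h1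
        _ ≤ γ^2 * (((uh k - ur k) ⬝ᵥ (A *ᵥ (uh k - ur k))) / a) :=
            mul_le_mul_of_nonneg_left h2 (sq_nonneg γ)
        _ = γ^2 / a * ((uh k - ur k) ⬝ᵥ (A *ᵥ (uh k - ur k))) := by ring)
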